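/- Let |ψ⟩ be a pure n-qubit state whose stabilizer group G has cardinality 2^{n−ν}, and let h₀ = 𝟙, h₁, …, h_k be Hermitian Pauli operators with Tr(h_i ψ) ≠ 0 lying in pairwise distinct cosets of G (with h_iG ≠ −h_jG for i ≠ j). Then Σ_{i=0}^{k} Tr(h_i ψ)² ≤ 2^ν. -/

import Mathlib

open scoped Matrix ComplexOrder ENNReal Classical

noncomputable section

abbrev QVec (n : ℕ) := (Fin n → Fin 2) → ℂ
abbrev QMat (n : ℕ) := Matrix (Fin n → Fin 2) (Fin n → Fin 2) ℂ

/-- `ψ` is a unit vector (a pure state). -/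
def IsUnitVec {n : ℕ} (ψ : QVec n) : Prop := ∑ x, Complex.normSq (ψ x) = 1

/-- The ℓ² norm of a vector. -/
def vnorm {n : ℕ} (v : QVec n) : ℝ := Real.sqrt (∑ x, Complex.normSq (v x))

/-- The density matrix `|ψ⟩⟨ψ|`. -/
def dm {n : ℕ} (ψ : QVec n) : QMat n := Matrix.vecMulVec ψ (star ψ)

/-- The four single-qubit Pauli matrices I, X, Y, Z. -/
def pauli1 : Fin 4 → Matrix (Fin 2) (Fin 2) ℂ :=
  ![1, !![0, 1; 1, 0], !![0, -Complex.I; Complex.I, 0], !![1, 0; 0, -1]]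

/-- The `n`-qubit Pauli operator `P₁ ⊗ ⋯ ⊗ P_n` given by a string `p`. -/
def pauliOp {n : ℕ} (p : Fin n → Fin 4) : QMat n :=
  fun x y => ∏ j, pauli1 (p j) (x j) (y j)

/-- The `n`-qubit Pauli group: matrices `i^a · P₁ ⊗ ⋯ ⊗ P_n`. -/
def PauliGroup (n : ℕ) : Set (QMat n) :=
  {M | ∃ (a : Fin 4) (p : Fin n → Fin 4), M = Complex.I ^ (a : ℕ) • pauliOp p}

/-- A Hermitian Pauli operator: `± P₁ ⊗ ⋯ ⊗ P_n`. -/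
def IsHermPauli {n : ℕ} (M : QMat n) : Prop :=
  ∃ (s : ℂ) (p : Fin n → Fin 4), (s = 1 ∨ s = -1) ∧ M = s • pauliOp p

/-- The stabilizer group `G = {P ∈ 𝒫_n : P|ψ⟩ = |ψ⟩}` of a pure state. -/
def stabGroup {n : ℕ} (ψ : QVec n) : Set (QMat n) :=
  {P | P ∈ PauliGroup n ∧ P.mulVec ψ = ψ}

/-- `M` is supported on the qubits in `A` (acts as the identity on the rest),
i.e. `M = f_A ⊗ 𝟙` for some matrix `f` on the `A` qubits. -/
def MatSupportedOn {n : ℕ} (A : Finset (Fin n)) (M : QMat n) : Prop :=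
  ∃ f : ({j // j ∈ A} → Fin 2) → ({j // j ∈ A} → Fin 2) → ℂ,
    ∀ x y, M x y =
      if ∀ j ∉ A, x j = y j then f (fun j => x j.1) (fun j => y j.1) else 0

/-- The local stabilizer subgroup `G_A`: stabilizers acting as the identity outside `A`. -/
def localStab {n : ℕ} (ψ : QVec n) (A : Finset (Fin n)) : Set (QMat n) :=
  {P | P ∈ stabGroup ψ ∧ MatSupportedOn A P}

/-- `log₂` of the cardinality of a set. -/
def logCard {α : Type*} (S : Set α) : ℝ := Real.logb 2 S.ncard

/-- The stabilizer entanglement `ℰ(ψ; A|B) = (|S| − |S_A| − |S_B|)/2` (with `B = Aᶜ`). -/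
def stabEnt {n : ℕ} (ψ : QVec n) (A : Finset (Fin n)) : ℝ :=
  (logCard (stabGroup ψ) - logCard (localStab ψ A) - logCard (localStab ψ Aᶜ)) / 2

/-- Combine an assignment on `A` and on `Aᶜ` into one on all qubits. -/
def mergeFn {n : ℕ} (A : Finset (Fin n)) (x : {j // j ∈ A} → Fin 2)
    (z : {j // j ∈ Aᶜ} → Fin 2) : Fin n → Fin 2 :=
  fun j => if h : j ∈ A then x ⟨j, h⟩ else z ⟨j, Finset.mem_compl.mpr h⟩

/-- The reduced density matrix `ψ_A = Tr_{Aᶜ} |ψ⟩⟨ψ|`. -/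
def reducedDM {n : ℕ} (A : Finset (Fin n)) (ψ : QVec n) :
    Matrix ({j // j ∈ A} → Fin 2) ({j // j ∈ A} → Fin 2) ℂ :=
  fun x y => ∑ z : {j // j ∈ Aᶜ} → Fin 2, ψ (mergeFn A x z) * star (ψ (mergeFn A y z))

/-- The α-Rényi entropy (base 2) of a Hermitian matrix, defined through its eigenvalues:
`S₀ = log₂ rank`, `S₁` the von Neumann entropy, `S_∞ = −log₂` (largest eigenvalue, which is
the operator norm for positive semidefinite matrices), and
`S_α = (1−α)⁻¹ log₂ Σ λ_i^α` otherwise. -/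
def renyi {m : Type*} [Fintype m] [DecidableEq m] (α : ℝ≥0∞)
    (ρ : Matrix m m ℂ) : ℝ :=
  if h : ρ.IsHermitian then
    if α = 0 then Real.logb 2 (ρ.rank : ℝ)
    else if α = 1 then -∑ i, h.eigenvalues i * Real.logb 2 (h.eigenvalues i)
    else if α = ⊤ then -Real.logb 2 (⨆ i, h.eigenvalues i)
    else (1 / (1 - α.toReal)) * Real.logb 2 (∑ i, h.eigenvalues i ^ α.toReal)
  else 0

def IsUnitary {n : ℕ} (U : QMat n) : Prop := U * Uᴴ = 1 ∧ Uᴴ * U = 1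

/-- A Clifford unitary: a unitary whose conjugation action maps the Pauli group onto itself. -/
def IsClifford {n : ℕ} (U : QMat n) : Prop :=
  IsUnitary U ∧ (fun P => U * P * Uᴴ) '' PauliGroup n = PauliGroup n

/-- Amplitudes of the Bell pair `|φ₊⟩ = (|00⟩+|11⟩)/√2`. -/
def bellAmp (a b : Fin 2) : ℂ := if a = b then ((Real.sqrt 2 : ℝ) : ℂ)⁻¹ else 0

/-- Trace out the last `m` qubits of a pure state on `n + m` qubits. -/
def traceOutLast {n m : ℕ} (Ψ : QVec (n + m)) : QMat n :=
  fun x y => ∑ z : Fin m → Fin 2,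
    Ψ (Fin.append x z) * star (Ψ (Fin.append y z))

/-- `Tr √ρ` for a positive semidefinite matrix (junk value `0` otherwise). -/
def sqrtTrace {m : Type*} [Fintype m] [DecidableEq m] (ρ : Matrix m m ℂ) : ℝ :=
  if h : ρ.PosSemidef then (h.1.eigenvectorUnitary.1 *
    Matrix.diagonal (fun i => ((Real.sqrt (h.1.eigenvalues i) : ℝ) : ℂ)) *
    (star h.1.eigenvectorUnitary : Matrix m m ℂ)).trace.re else 0

/-- `S_{1/2}(ψ_A) = 2 log₂ Tr √ψ_A`. -/
def sHalf {n : ℕ} (A : Finset (Fin n)) (ψ : QVec n) : ℝ :=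
  2 * Real.logb 2 (sqrtTrace (reducedDM A ψ))

/-- The set `SEP^{(E)}(A;B)`: convex hull of pure states with `S_{1/2}` entanglement ≤ E. -/
def SEPE {n : ℕ} (A : Finset (Fin n)) (E : ℝ) : Set (QMat n) :=
  convexHull ℝ {ρ | ∃ ψ : QVec n, IsUnitVec ψ ∧ sHalf A ψ ≤ E ∧ ρ = dm ψ}

/-- `ψ` is a product state across the bipartition `A | Aᶜ`. -/
def IsProdAcross {n : ℕ} (A : Finset (Fin n)) (ψ : QVec n) : Prop :=
  ∃ (f : ({j // j ∈ A} → Fin 2) → ℂ) (g : ({j // j ∈ Aᶜ} → Fin 2) → ℂ),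
    ∀ x, ψ x = f (fun j => x j.1) * g (fun j => x j.1)

/-- The separable states across `A | Aᶜ`. -/
def SEPset {n : ℕ} (A : Finset (Fin n)) : Set (QMat n) :=
  convexHull ℝ {ρ | ∃ ψ : QVec n, IsUnitVec ψ ∧ IsProdAcross A ψ ∧ ρ = dm ψ}

/-- The trace norm `‖X‖₁ = Tr √(XᴴX)` (sum of singular values). -/
def traceNorm {m : Type*} [Fintype m] [DecidableEq m] (X : Matrix m m ℂ) : ℝ :=
  sqrtTrace (Xᴴ * X)

end

noncomputable section

def s5_pmul : Fin 4 → Fin 4 → Fin 4 := ![![0,1,2,3],![1,0,3,2],![2,3,0,1],![3,2,1,0]]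

def s5_pph : Fin 4 → Fin 4 → ℂ :=
  ![![1,1,1,1],![1,1,Complex.I,-Complex.I],![1,-Complex.I,1,Complex.I],![1,Complex.I,-Complex.I,1]]

def s5_pphe : Fin 4 → Fin 4 → Fin 4 := ![![0,0,0,0],![0,0,1,3],![0,3,0,1],![0,1,3,0]]

lemma s5_pph_norm (a b : Fin 4) : ‖s5_pph a b‖ = 1 := by
  fin_cases a <;> fin_cases b <;> simp [s5_pph, Matrix.vecHead, Matrix.vecTail]

lemma s5_pph_diag (a : Fin 4) : s5_pph a a = 1 := by fin_cases a <;> simp [s5_pph, Matrix.vecHead, Matrix.vecTail]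

lemma s5_pmul_diag (a : Fin 4) : s5_pmul a a = 0 := by fin_cases a <;> simp [s5_pmul]

lemma s5_pauli1_mul (a b : Fin 4) :
    pauli1 a * pauli1 b = s5_pph a b • pauli1 (s5_pmul a b) := by
  fin_cases a <;> fin_cases b <;>
    · ext i j
      fin_cases i <;> fin_cases j <;>
        simp [pauli1, s5_pmul, s5_pph, Matrix.vecHead, Matrix.vecTail, Matrix.mul_apply, Fin.sum_univ_two, Matrix.one_apply] <;>
        ring_nf <;> simp [Complex.I_sq]

lemma s5_pauli1_herm (a : Fin 4) : (pauli1 a)ᴴ = pauli1 a := by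
  fin_cases a <;>
    · ext i j
      fin_cases i <;> fin_cases j <;>
        simp [pauli1, Matrix.conjTranspose_apply, Matrix.one_apply]

lemma s5_pauli1_complete (a b c d : Fin 2) :
    ∑ k : Fin 4, pauli1 k a b * pauli1 k c d = if a = d ∧ b = c then 2 else 0 := by
  fin_cases a <;> fin_cases b <;> fin_cases c <;> fin_cases d <;>
    simp [pauli1, Fin.sum_univ_four, Matrix.one_apply, Matrix.vecHead, Matrix.vecTail] <;>
    ring_nf <;> simp [Complex.I_sq] <;> ring

lemma s5_pph_pow_Ip (a b : Fin 4) : s5_pph a b = Complex.I ^ ((s5_pphe a b : Fin 4) : ℕ) := by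
  fin_cases a <;> fin_cases b <;>
    simp [s5_pph, s5_pphe, Matrix.vecHead, Matrix.vecTail, pow_succ, Complex.I_mul_I,
      show ((3:Fin 4):ℕ) = 3 from rfl]

lemma s5_pph_pow_I (a b : Fin 4) : ∃ c : Fin 4, s5_pph a b = Complex.I ^ (c : ℕ) :=
  ⟨s5_pphe a b, s5_pph_pow_Ip a b⟩

lemma s5_pow_I_mul (a b : Fin 4) :
    Complex.I ^ (a : ℕ) * Complex.I ^ (b : ℕ) = Complex.I ^ (((a + b) : Fin 4) : ℕ) := by
  rw [← pow_add]
  conv_rhs => rw [show ((a + b : Fin 4) : ℕ) = ((a : ℕ) + (b : ℕ)) % 4 from Fin.val_add a b]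
  exact pow_eq_pow_mod _ Complex.I_pow_four

lemma s5_prod_pow_I {ι : Type*} (f : ι → ℂ)
    (hf : ∀ j, ∃ c : Fin 4, f j = Complex.I ^ (c : ℕ)) (s : Finset ι) :
    ∃ c : Fin 4, (∏ j ∈ s, f j) = Complex.I ^ (c : ℕ) := by
  classical
  induction s using Finset.induction with
  | empty => exact ⟨0, by simp⟩
  | @insert j s hj ih =>
      obtain ⟨c, hc⟩ := ih
      obtain ⟨d, hd⟩ := hf j
      exact ⟨d + c, by rw [Finset.prod_insert hj, hc, hd, s5_pow_I_mul]⟩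

lemma s5_prod_pph_pow_I {n : ℕ} (p r : Fin n → Fin 4) :
    ∃ c : Fin 4, (∏ j, s5_pph (p j) (r j)) = Complex.I ^ (c : ℕ) :=
  s5_prod_pow_I _ (fun j => s5_pph_pow_I (p j) (r j)) _

lemma s5_prod_ite_all {ι : Type*} [Fintype ι] (P : ι → Prop) [DecidablePred P] (c : ι → ℂ) :
    ∏ j, (if P j then c j else 0) = if ∀ j, P j then ∏ j, c j else 0 := by
  by_cases h : ∀ j, P j
  · rw [if_pos h]
    exact Finset.prod_congr rfl fun j _ => if_pos (h j)
  · obtain ⟨j, hj⟩ := not_forall.mp h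
    rw [if_neg h]
    exact Finset.prod_eq_zero (Finset.mem_univ j) (by simp [hj])

lemma s5_pauliOp_zero {n : ℕ} : pauliOp (fun _ : Fin n => (0 : Fin 4)) = 1 := by
  ext x y
  simp only [pauliOp, pauli1, Matrix.one_apply, Matrix.cons_val_zero]
  rw [s5_prod_ite_all]
  simp [funext_iff]

lemma s5_pauliOp_mul {n : ℕ} (p r : Fin n → Fin 4) :
    pauliOp p * pauliOp r
      = (∏ j, s5_pph (p j) (r j)) • pauliOp (fun j => s5_pmul (p j) (r j)) := by
  ext x y
  rw [Matrix.mul_apply]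
  have h1 : ∀ z : Fin n → Fin 2, pauliOp p x z * pauliOp r z y
      = ∏ j, (pauli1 (p j) (x j) (z j) * pauli1 (r j) (z j) (y j)) := by
    intro z; rw [pauliOp, pauliOp, ← Finset.prod_mul_distrib]
  simp_rw [h1]
  rw [← Fintype.prod_sum fun j b => pauli1 (p j) (x j) b * pauli1 (r j) b (y j)]
  have h2 : ∀ j : Fin n, (∑ b, pauli1 (p j) (x j) b * pauli1 (r j) b (y j))
      = s5_pph (p j) (r j) * pauli1 (s5_pmul (p j) (r j)) (x j) (y j) := by
    intro j
    have := congrFun (congrFun (s5_pauli1_mul (p j) (r j)) (x j)) (y j)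
    simpa [Matrix.mul_apply] using this
  simp_rw [h2]
  rw [Finset.prod_mul_distrib]
  simp [pauliOp, Matrix.smul_apply]

lemma s5_pauliOp_herm {n : ℕ} (p : Fin n → Fin 4) : (pauliOp p)ᴴ = pauliOp p := by
  ext x y
  simp only [Matrix.conjTranspose_apply, pauliOp]
  rw [show (star (∏ j, pauli1 (p j) (y j) (x j)) : ℂ)
      = ∏ j, star (pauli1 (p j) (y j) (x j)) from map_prod (starRingEnd ℂ) _ _]
  refine Finset.prod_congr rfl fun j _ => ?_
  have := congrFun (congrFun (s5_pauli1_herm (p j)) (x j)) (y j)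
  simpa [Matrix.conjTranspose_apply, Complex.star_def] using this

lemma s5_pauliOp_complete {n : ℕ} (x y z w : Fin n → Fin 2) :
    ∑ p : Fin n → Fin 4, pauliOp p x y * pauliOp p z w
      = if x = w ∧ y = z then (2:ℂ)^n else 0 := by
  have h1 : ∀ p : Fin n → Fin 4, pauliOp p x y * pauliOp p z w
      = ∏ j, (pauli1 (p j) (x j) (y j) * pauli1 (p j) (z j) (w j)) := by
    intro p; rw [pauliOp, pauliOp, ← Finset.prod_mul_distrib]
  simp_rw [h1]
  rw [← Fintype.prod_sum fun j k => pauli1 k (x j) (y j) * pauli1 k (z j) (w j)]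
  simp_rw [s5_pauli1_complete]
  rw [s5_prod_ite_all]
  have : (∀ j, x j = w j ∧ y j = z j) ↔ (x = w ∧ y = z) := by
    rw [forall_and, funext_iff, funext_iff]
  simp [this, Finset.prod_const]

lemma s5_trace_mul_dm {n : ℕ} (M : QMat n) (ψ : QVec n) :
    Matrix.trace (M * dm ψ)
      = ∑ q : (Fin n → Fin 2) × (Fin n → Fin 2),
          M q.1 q.2 * (ψ q.2 * star (ψ q.1)) := by
  rw [Matrix.trace, Fintype.sum_prod_type]
  refine Finset.sum_congr rfl fun x _ => ?_
  rw [Matrix.diag_apply, Matrix.mul_apply]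
  refine Finset.sum_congr rfl fun y _ => ?_
  simp [dm, Matrix.vecMulVec_apply, mul_assoc]

lemma s5_trace_pauli_real {n : ℕ} (p : Fin n → Fin 4) (ψ : QVec n) :
    (starRingEnd ℂ) (Matrix.trace (pauliOp p * dm ψ)) = Matrix.trace (pauliOp p * dm ψ) := by
  rw [s5_trace_mul_dm, map_sum]
  rw [show (∑ q : (Fin n → Fin 2) × (Fin n → Fin 2), (starRingEnd ℂ)
        (pauliOp p q.1 q.2 * (ψ q.2 * star (ψ q.1))))
      = ∑ q : (Fin n → Fin 2) × (Fin n → Fin 2),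
        pauliOp p q.2 q.1 * (ψ q.1 * star (ψ q.2)) by
    refine Finset.sum_congr rfl fun q _ => ?_
    have hP : (starRingEnd ℂ) (pauliOp p q.1 q.2) = pauliOp p q.2 q.1 := by
      have := congrFun (congrFun (s5_pauliOp_herm p) q.2) q.1
      simpa [Matrix.conjTranspose_apply, Complex.star_def] using this
    simp only [map_mul, hP, Complex.star_def, Complex.conj_conj]
    ring]
  exact Fintype.sum_equiv (Equiv.prodComm _ _) _ _ (fun q => by simp)

lemma s5_sum_trace_sq {n : ℕ} (ψ : QVec n) (hψ : IsUnitVec ψ) :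
    ∑ p : Fin n → Fin 4, (Matrix.trace (pauliOp p * dm ψ))^2 = (2:ℂ)^n := by
  simp_rw [s5_trace_mul_dm, sq, Finset.sum_mul_sum]
  rw [Finset.sum_comm]
  have key : ∀ q : (Fin n → Fin 2) × (Fin n → Fin 2),
      (∑ q' : (Fin n → Fin 2) × (Fin n → Fin 2), ∑ p : Fin n → Fin 4,
        (pauliOp p q.1 q.2 * (ψ q.2 * star (ψ q.1))) *
        (pauliOp p q'.1 q'.2 * (ψ q'.2 * star (ψ q'.1))))
      = (2:ℂ)^n * ((ψ q.1 * star (ψ q.1)) * (ψ q.2 * star (ψ q.2))) := by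
    intro q
    have h1 : ∀ q' : (Fin n → Fin 2) × (Fin n → Fin 2),
        (∑ p : Fin n → Fin 4,
          (pauliOp p q.1 q.2 * (ψ q.2 * star (ψ q.1))) *
          (pauliOp p q'.1 q'.2 * (ψ q'.2 * star (ψ q'.1))))
        = (if q' = (q.2, q.1) then (2:ℂ)^n else 0) *
            ((ψ q.2 * star (ψ q.1)) * (ψ q'.2 * star (ψ q'.1))) := by
      intro q'
      rw [show (∑ p : Fin n → Fin 4,
            (pauliOp p q.1 q.2 * (ψ q.2 * star (ψ q.1))) *
            (pauliOp p q'.1 q'.2 * (ψ q'.2 * star (ψ q'.1))))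
          = ∑ p : Fin n → Fin 4, (pauliOp p q.1 q.2 * pauliOp p q'.1 q'.2) *
              ((ψ q.2 * star (ψ q.1)) * (ψ q'.2 * star (ψ q'.1))) from
        Finset.sum_congr rfl fun p _ => by ring]
      rw [← Finset.sum_mul, s5_pauliOp_complete]
      congr 2
      simp only [eq_iff_iff, Prod.ext_iff]
      constructor
      · rintro ⟨h1, h2⟩; exact ⟨h2.symm, h1.symm⟩
      · rintro ⟨h1, h2⟩; exact ⟨h2.symm, h1.symm⟩
    simp_rw [h1, ite_mul, zero_mul]
    rw [Finset.sum_ite_eq' Finset.univ ((q.2, q.1) : (Fin n → Fin 2) × (Fin n → Fin 2))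
        (fun q' => ((2:ℂ)^n) * ((ψ q.2 * star (ψ q.1)) * (ψ q'.2 * star (ψ q'.1))))]
    simp only [Finset.mem_univ, if_true]
    ring
  rw [show (∑ q : (Fin n → Fin 2) × (Fin n → Fin 2),
        ∑ p : Fin n → Fin 4, ∑ q' : (Fin n → Fin 2) × (Fin n → Fin 2),
          (pauliOp p q.1 q.2 * (ψ q.2 * star (ψ q.1))) *
          (pauliOp p q'.1 q'.2 * (ψ q'.2 * star (ψ q'.1))))
      = ∑ q : (Fin n → Fin 2) × (Fin n → Fin 2),
          (2:ℂ)^n * ((ψ q.1 * star (ψ q.1)) * (ψ q.2 * star (ψ q.2))) from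
    Finset.sum_congr rfl fun q _ => by rw [Finset.sum_comm]; exact key q]
  rw [← Finset.mul_sum]
  have h2 : (∑ q : (Fin n → Fin 2) × (Fin n → Fin 2),
      (ψ q.1 * star (ψ q.1)) * (ψ q.2 * star (ψ q.2))) = 1 := by
    have hx : (∑ x : Fin n → Fin 2, ψ x * star (ψ x)) = 1 := by
      have h3 := hψ
      rw [IsUnitVec] at h3
      calc (∑ x : Fin n → Fin 2, ψ x * star (ψ x))
          = ∑ x : Fin n → Fin 2, ((Complex.normSq (ψ x) : ℝ) : ℂ) :=
            Finset.sum_congr rfl fun x _ => by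
              rw [Complex.star_def, Complex.mul_conj]
        _ = 1 := by rw [← Complex.ofReal_sum, h3, Complex.ofReal_one]
    rw [Fintype.sum_prod_type]
    dsimp only
    rw [← Finset.sum_mul_sum
      (f := fun x : Fin n → Fin 2 => ψ x * star (ψ x))
      (g := fun y : Fin n → Fin 2 => ψ y * star (ψ y)), hx, one_mul]
  rw [h2, mul_one]

lemma s5_stab_mul_dm {n : ℕ} {g : QMat n} {ψ : QVec n} (hg : g.mulVec ψ = ψ) :
    g * dm ψ = dm ψ := by
  ext x y
  rw [Matrix.mul_apply]
  simp only [dm, Matrix.vecMulVec_apply, Pi.star_apply]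
  rw [show (∑ z, g x z * (ψ z * star (ψ y))) = (∑ z, g x z * ψ z) * star (ψ y) by
    rw [Finset.sum_mul]; exact Finset.sum_congr rfl fun z _ => by ring]
  congr 1
  exact congrFun hg x

lemma s5_hermPauli_mul_pauli {n : ℕ} {M N : QMat n} (hM : IsHermPauli M)
    (hN : N ∈ PauliGroup n) :
    ∃ (q : Fin n → Fin 4) (c : ℂ), ‖c‖ = 1 ∧ M * N = c • pauliOp q := by
  obtain ⟨s, p, hs, rfl⟩ := hM
  obtain ⟨a, r, rfl⟩ := hN
  refine ⟨fun j => s5_pmul (p j) (r j), s * Complex.I ^ (a : ℕ) * ∏ j, s5_pph (p j) (r j), ?_, ?_⟩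
  · rw [norm_mul, norm_mul, norm_pow]
    have : ‖s‖ = 1 := by rcases hs with rfl | rfl <;> simp
    rw [this, Complex.norm_I, one_pow, norm_prod]
    have habs : ∀ a b : Fin 4, ‖s5_pph a b‖ = 1 := fun a b => s5_pph_norm a b
    simp [habs]
  · rw [smul_mul_smul_comm, s5_pauliOp_mul, smul_smul, mul_assoc]

lemma s5_pauli_sq_eq_smul_one {n : ℕ} (p : Fin n → Fin 4) :
    pauliOp p * pauliOp p = (1 : QMat n) := by
  rw [s5_pauliOp_mul]
  simp only [s5_pph_diag, s5_pmul_diag, Finset.prod_const_one]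
  rw [show (fun j : Fin n => (0:Fin 4)) = fun _ : Fin n => (0:Fin 4) from rfl, s5_pauliOp_zero]
  simp

lemma s5_hermPauli_sq {n : ℕ} {M : QMat n} (hM : IsHermPauli M) : M * M = 1 := by
  obtain ⟨s, p, hs, rfl⟩ := hM
  rw [smul_mul_smul_comm, s5_pauli_sq_eq_smul_one]
  rcases hs with rfl | rfl <;> simp

lemma s5_psi_ne_zero {n : ℕ} {ψ : QVec n} (hψ : IsUnitVec ψ) : ψ ≠ 0 := by
  intro h
  rw [IsUnitVec, h] at hψ
  simp at hψ

lemma s5_stab_sq {n : ℕ} {ψ : QVec n} (hψ : IsUnitVec ψ) {g : QMat n}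
    (hg : g ∈ stabGroup ψ) : g * g = 1 := by
  obtain ⟨⟨a, r, rfl⟩, hfix⟩ := hg
  set g : QMat n := Complex.I ^ (a : ℕ) • pauliOp r with hgdef
  have hsq : g * g = (Complex.I ^ (a : ℕ) * Complex.I ^ (a : ℕ)) • (1 : QMat n) := by
    rw [hgdef, smul_mul_smul_comm, s5_pauli_sq_eq_smul_one]
  have hfix2 : (g * g).mulVec ψ = ψ := by
    rw [← Matrix.mulVec_mulVec, hfix, hfix]
  rw [hsq] at hfix2
  rw [Matrix.smul_mulVec, Matrix.one_mulVec] at hfix2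
  obtain ⟨x, hx⟩ := Function.ne_iff.mp (s5_psi_ne_zero hψ)
  have hx0 : ψ x ≠ 0 := hx
  have := congrFun hfix2 x
  simp only [Pi.smul_apply, smul_eq_mul] at this
  have hc : Complex.I ^ (a : ℕ) * Complex.I ^ (a : ℕ) = 1 := by
    have h2 : (Complex.I ^ (a : ℕ) * Complex.I ^ (a : ℕ) - 1) * ψ x = 0 := by
      rw [sub_mul, one_mul, this, sub_self]
    rcases mul_eq_zero.mp h2 with h | h
    · exact sub_eq_zero.mp h
    · exact absurd h hx0
  rw [hsq, hc, one_smul]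

lemma s5_stab_mul_mem {n : ℕ} {ψ : QVec n} {g g' : QMat n}
    (hg : g ∈ stabGroup ψ) (hg' : g' ∈ stabGroup ψ) : g * g' ∈ stabGroup ψ := by
  obtain ⟨⟨a, r, rfl⟩, hfix⟩ := hg
  obtain ⟨⟨b, u, rfl⟩, hfix'⟩ := hg'
  constructor
  · obtain ⟨c, hc⟩ := s5_prod_pph_pow_I r u
    refine ⟨a + (b + c), fun j => s5_pmul (r j) (u j), ?_⟩
    rw [smul_mul_smul_comm, s5_pauliOp_mul, smul_smul, mul_assoc, hc,
        s5_pow_I_mul, s5_pow_I_mul]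
  · rw [← Matrix.mulVec_mulVec, hfix', hfix]

lemma s5_norm_one_real {c : ℂ} (h : (starRingEnd ℂ) c = c) (hn : ‖c‖ = 1) :
    c = 1 ∨ c = -1 := by
  obtain ⟨r, rfl⟩ := Complex.conj_eq_iff_real.mp h
  rw [Complex.norm_real] at hn
  rcases abs_eq (by norm_num : (0:ℝ) ≤ 1) |>.mp hn with h1 | h1
  · left; rw [h1]; norm_num
  · right; rw [h1]; norm_num

/-- for Hermitian Paulis `h₀ = 𝟙, h₁, …, h_k` with nonzero expectation on
a state of stabilizer nullity ν, lying in pairwise distinct (signed) cosets of the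
stabilizer group, `Σ_i Tr(h_i ψ)² ≤ 2^ν`. -/
theorem statement5 (n ν k : ℕ) (hνn : ν ≤ n) (ψ : QVec n) (hψ : IsUnitVec ψ)
    (hcard : (stabGroup ψ).ncard = 2 ^ (n - ν))
    (h : Fin (k + 1) → QMat n) (h0 : h 0 = 1)
    (hherm : ∀ i, IsHermPauli (h i))
    (hnz : ∀ i, Matrix.trace (h i * dm ψ) ≠ 0)
    (hdistinct : ∀ i j, i ≠ j → ∀ P ∈ stabGroup ψ, h i ≠ h j * P ∧ h i ≠ -(h j * P)) :
    ∑ i, ((Matrix.trace (h i * dm ψ)).re) ^ 2 ≤ (2 : ℝ) ^ ν := by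
  classical
  set T : Fin (k+1) → ℂ := fun i => Matrix.trace (h i * dm ψ) with hTdef
  have hTreal : ∀ i, (starRingEnd ℂ) (T i) = T i := by
    intro i
    obtain ⟨s, p, hs, hhi⟩ := hherm i
    have hTi : T i = s * Matrix.trace (pauliOp p * dm ψ) := by
      rw [hTdef]
      simp only
      rw [hhi, Matrix.smul_mul, Matrix.trace_smul, smul_eq_mul]
    rw [hTi, map_mul, s5_trace_pauli_real]
    congr 1
    rcases hs with rfl | rfl <;> simp
  have hGfin : (stabGroup ψ).Finite :=
    Set.finite_of_ncard_ne_zero (by rw [hcard]; positivity)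
  set G : Finset (QMat n) := hGfin.toFinset with hGdef
  have hGcard : G.card = 2 ^ (n - ν) := by
    rw [hGdef, ← Set.ncard_eq_toFinset_card _ hGfin, hcard]
  have hGmem : ∀ g, g ∈ G ↔ g ∈ stabGroup ψ := fun g => hGfin.mem_toFinset
  -- decomposition with sign
  have hFex : ∀ (i : Fin (k+1)) (g : QMat n), ∃ (q : Fin n → Fin 4) (c : ℂ),
      g ∈ stabGroup ψ → (c = 1 ∨ c = -1) ∧ h i * g = c • pauliOp q ∧
        T i = c * Matrix.trace (pauliOp q * dm ψ) := by
    intro i g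
    by_cases hg : g ∈ stabGroup ψ
    · obtain ⟨q, c, hc1, hceq⟩ := s5_hermPauli_mul_pauli (hherm i) hg.1
      have htr : T i = c * Matrix.trace (pauliOp q * dm ψ) := by
        have e : (h i * g) * dm ψ = h i * dm ψ := by rw [mul_assoc, s5_stab_mul_dm hg.2]
        calc T i = Matrix.trace ((h i * g) * dm ψ) := by rw [e]
          _ = Matrix.trace ((c • pauliOp q) * dm ψ) := by rw [hceq]
          _ = c * Matrix.trace (pauliOp q * dm ψ) := by
              rw [Matrix.smul_mul, Matrix.trace_smul, smul_eq_mul]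
      have htq : Matrix.trace (pauliOp q * dm ψ) ≠ 0 := by
        intro h0
        exact hnz i (by rw [show Matrix.trace (h i * dm ψ) = T i from rfl, htr, h0, mul_zero])
      have hcreal : (starRingEnd ℂ) c = c := by
        have h1 := hTreal i
        rw [htr, map_mul, s5_trace_pauli_real] at h1
        exact mul_right_cancel₀ htq h1
      exact ⟨q, c, fun _ => ⟨s5_norm_one_real hcreal hc1, hceq, htr⟩⟩
    · exact ⟨fun _ => 0, 1, fun hmem => absurd hmem hg⟩
  choose F C hF using hFex
  -- equal squares
  have hsq : ∀ i g, g ∈ stabGroup ψ →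
      ((Matrix.trace (pauliOp (F i g) * dm ψ)).re)^2 = ((T i).re)^2 := by
    intro i g hg
    obtain ⟨hc, -, htr⟩ := hF i g hg
    rcases hc with hc | hc
    · rw [htr, hc, one_mul]
    · rw [htr, hc, neg_one_mul, Complex.neg_re, neg_sq]
  -- injectivity
  have hCinv : ∀ i g, g ∈ stabGroup ψ → (C i g)⁻¹ = C i g := by
    intro i g hg
    rcases (hF i g hg).1 with hc | hc <;> rw [hc] <;> norm_num
  have hCne : ∀ i g, g ∈ stabGroup ψ → C i g ≠ 0 := by
    intro i g hg
    rcases (hF i g hg).1 with hc | hc <;> rw [hc] <;> norm_num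
  have hinj : ∀ i g j g', g ∈ stabGroup ψ → g' ∈ stabGroup ψ →
      F i g = F j g' → i = j ∧ g = g' := by
    intro i g j g' hg hg' heq
    obtain ⟨hci, hei, -⟩ := hF i g hg
    obtain ⟨hcj, hej, -⟩ := hF j g' hg'
    rw [heq] at hei
    have hP : pauliOp (F j g') = (C j g')⁻¹ • (h j * g') := by
      rw [hej, smul_smul, inv_mul_cancel₀ (hCne j g' hg'), one_smul]
    have e1 : h i * g = (C i g * (C j g')⁻¹) • (h j * g') := by
      rw [hei, hP, smul_smul]
    have e2 : h i = (C i g * (C j g')⁻¹) • (h j * (g' * g)) := by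
      have e := congrArg (fun M => M * g) e1
      rw [mul_assoc, s5_stab_sq hψ hg, mul_one, Matrix.smul_mul, mul_assoc] at e
      exact e
    have hs : C i g * (C j g')⁻¹ = 1 ∨ C i g * (C j g')⁻¹ = -1 := by
      rcases hci with hc | hc <;> rcases hcj with hc' | hc' <;>
        rw [hc, hc'] <;> norm_num
    have hij : i = j := by
      by_contra hne
      obtain ⟨hd1, hd2⟩ := hdistinct i j hne (g' * g) (s5_stab_mul_mem hg' hg)
      rcases hs with hs | hs
      · exact hd1 (by rw [e2, hs, one_smul])
      · exact hd2 (by rw [e2, hs, neg_one_smul])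
    subst hij
    refine ⟨rfl, ?_⟩
    -- g = ± g'
    have e3 : g = (C i g * (C i g')⁻¹) • g' := by
      have e := congrArg (fun M => h i * M) e1
      rw [← mul_assoc, s5_hermPauli_sq (hherm i), one_mul, Matrix.mul_smul,
          ← mul_assoc, s5_hermPauli_sq (hherm i), one_mul] at e
      exact e
    rcases hs with hs | hs
    · rw [e3, hs, one_smul]
    · exfalso
      rw [hs, neg_one_smul] at e3
      have hfix : g.mulVec ψ = ψ := hg.2
      rw [e3, Matrix.neg_mulVec, hg'.2] at hfix
      have : ψ = 0 := by
        funext x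
        have := congrFun hfix x
        simp only [Pi.neg_apply] at this
        show ψ x = (0:ℂ)
        linear_combination (-1/2 : ℂ) * this
      exact s5_psi_ne_zero hψ this
  -- final counting
  set f : (Fin n → Fin 4) → ℝ := fun p => ((Matrix.trace (pauliOp p * dm ψ)).re)^2 with hfdef
  have hsum_all : ∑ p : Fin n → Fin 4, f p = (2:ℝ)^n := by
    have hC := s5_sum_trace_sq ψ hψ
    have hre : ∀ p : Fin n → Fin 4,
        (Matrix.trace (pauliOp p * dm ψ))^2 = ((f p : ℝ) : ℂ) := by
      intro p
      have hr := Complex.conj_eq_iff_re.mp (s5_trace_pauli_real p ψ)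
      rw [hfdef]
      push_cast
      rw [hr]
    rw [Finset.sum_congr rfl fun p _ => hre p, ← Complex.ofReal_sum] at hC
    have : ((∑ p : Fin n → Fin 4, f p : ℝ) : ℂ) = (((2:ℝ)^n : ℝ) : ℂ) := by
      rw [hC]; push_cast; ring
    exact_mod_cast this
  set A : Finset (Fin (k+1) × QMat n) := Finset.univ ×ˢ G with hAdef
  have hinjA : ∀ x ∈ A, ∀ y ∈ A, F x.1 x.2 = F y.1 y.2 → x = y := by
    intro x hx y hy hxy
    have hgx : x.2 ∈ stabGroup ψ := (hGmem _).mp (Finset.mem_product.mp hx).2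
    have hgy : y.2 ∈ stabGroup ψ := (hGmem _).mp (Finset.mem_product.mp hy).2
    obtain ⟨e1, e2⟩ := hinj _ _ _ _ hgx hgy hxy
    exact Prod.ext e1 e2
  have hbound : ∑ ig ∈ A, f (F ig.1 ig.2) ≤ ∑ p : Fin n → Fin 4, f p := by
    calc ∑ ig ∈ A, f (F ig.1 ig.2)
        = ∑ p ∈ A.image (fun ig => F ig.1 ig.2), f p := (Finset.sum_image hinjA).symm
      _ ≤ ∑ p : Fin n → Fin 4, f p :=
          Finset.sum_le_sum_of_subset_of_nonneg (Finset.subset_univ _)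
            (fun p _ _ => sq_nonneg _)
  have hlhs : ∑ ig ∈ A, f (F ig.1 ig.2)
      = (2:ℝ)^(n-ν) * ∑ i, ((T i).re)^2 := by
    rw [hAdef, Finset.sum_product]
    calc ∑ i, ∑ g ∈ G, f (F i g)
        = ∑ i : Fin (k+1), ∑ _g ∈ G, ((T i).re)^2 :=
          Finset.sum_congr rfl fun i _ =>
            Finset.sum_congr rfl fun g hg => hsq i g ((hGmem g).mp hg)
      _ = ∑ i : Fin (k+1), (G.card : ℝ) * ((T i).re)^2 := by
          simp [Finset.sum_const, nsmul_eq_mul]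
      _ = (2:ℝ)^(n-ν) * ∑ i, ((T i).re)^2 := by
          rw [Finset.mul_sum]
          refine Finset.sum_congr rfl fun i _ => ?_
          rw [hGcard]
          push_cast
          ring
  have hfinal : (2:ℝ)^(n-ν) * ∑ i, ((T i).re)^2 ≤ (2:ℝ)^n := by
    rw [← hlhs, ← hsum_all]; exact hbound
  have hpow : (2:ℝ)^(n-ν) * (2:ℝ)^ν = (2:ℝ)^n := by
    rw [← pow_add]; congr 1; omega
  have hpos : (0:ℝ) < (2:ℝ)^(n-ν) := by positivity
  rw [← hpow] at hfinal
  exact le_of_mul_le_mul_left hfinal hpos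

end
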